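/- Let G be a group and let (V, ρ) be a finite-dimensional complex representation of G that decomposes as an internal direct sum V = ⨁_{r∈R} V_r over a finite index set R, where each V_r is a ρ-invariant subspace, the restriction of ρ to each V_r is irreducible, and the restrictions to distinct V_r are pairwise non-isomorphic. Suppose there exist finite-dimensional complex vector spaces M_in and M_out, fixed linear maps E : V → M_in and D : M_out → V, and for each g ∈ G a linear map S_g : M_in → M_out, such that ρ(g) = D ∘ S_g ∘ E for every g ∈ G. Then (dim M_in) · (dim M_out) ≥ Σ_{r∈R} (dim V_r)². -/

import Mathlib

section Proj
variable {V : Type*} [AddCommGroup V] [Module ℂ V] {R : Type*} [DecidableEq R]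
  (p : R → Submodule ℂ V) (hinternal : DirectSum.IsInternal p)

/-- The projection onto `p r` along the internal direct sum decomposition. -/
noncomputable def projID (r : R) : V →ₗ[ℂ] V :=
  (p r).subtype ∘ₗ (DirectSum.component ℂ R (fun r => ↥(p r)) r) ∘ₗ
    (LinearEquiv.ofBijective (DirectSum.coeLinearMap p) hinternal).symm.toLinearMap

lemma projID_of_mem {r s : R} {x : V} (hx : x ∈ p s) :
    projID p hinternal r x = if h : s = r then x else 0 := by
  have hrfl : projID p hinternal r x =
      ((((LinearEquiv.ofBijective (DirectSum.coeLinearMap p) hinternal).symm x) r : ↥(p r)) : V) :=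
    rfl
  rw [hrfl]
  rcases eq_or_ne s r with rfl | hne
  · rw [hinternal.ofBijective_coeLinearMap_of_mem hx]; simp
  · rw [hinternal.ofBijective_coeLinearMap_of_mem_ne hne hx]; simp [hne]

lemma projID_mem (r : R) (x : V) : projID p hinternal r x ∈ p r := by
  simp only [projID, LinearMap.coe_comp, Function.comp_apply, Submodule.coe_subtype]
  exact Submodule.coe_mem _

lemma sum_projID [Fintype R] (x : V) : ∑ r, projID p hinternal r x = x := by
  have hx : x ∈ (⊤ : Submodule ℂ V) := trivial
  rw [← hinternal.submodule_iSup_eq_top] at hx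
  induction hx using Submodule.iSup_induction' with
  | mem s y hy =>
      rw [Finset.sum_eq_single s]
      · exact (projID_of_mem p hinternal hy).trans (by simp)
      · intro r _ hr
        exact (projID_of_mem p hinternal hy).trans (by simp [hr.symm])
      · simp
  | zero => simp
  | add y z _ _ hy hz => simp only [map_add, Finset.sum_add_distrib, hy, hz]

end Proj

theorem density
    {G : Type*} [Group G] {V : Type*} [AddCommGroup V] [Module ℂ V]
    [FiniteDimensional ℂ V] (ρ : Representation ℂ G V)
    {R : Type*} [Fintype R] [DecidableEq R] (p : R → Submodule ℂ V)
    (hinternal : DirectSum.IsInternal p)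
    (hinv : ∀ (r : R) (g : G) (x : V), x ∈ p r → ρ g x ∈ p r)
    (hbot : ∀ r : R, p r ≠ ⊥)
    (hirr : ∀ (r : R) (q : Submodule ℂ V), q ≤ p r →
      (∀ (g : G) (x : V), x ∈ q → ρ g x ∈ q) → q = ⊥ ∨ q = p r)
    (hni : ∀ r r' : R, r ≠ r' →
      ¬ ∃ f : (p r) ≃ₗ[ℂ] (p r'),
        ∀ (g : G) (x : p r),
          ((f ⟨ρ g (x : V), hinv r g (x : V) x.2⟩ : p r') : V) = ρ g ((f x : p r') : V))
    (T : V →ₗ[ℂ] V) (hT : ∀ (r : R) (x : V), x ∈ p r → T x ∈ p r) :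
    T ∈ Submodule.span ℂ (Set.range fun g => (ρ g : V →ₗ[ℂ] V)) := by
  classical
  let π : MonoidAlgebra ℂ G →ₐ[ℂ] Module.End ℂ V := ρ.asAlgebraHom
  letI : Module (MonoidAlgebra ℂ G) V := Module.compHom V π.toRingHom
  have hsmul : ∀ (b : MonoidAlgebra ℂ G) (v : V), b • v = π b v := fun _ _ => rfl
  haveI hTower : IsScalarTower ℂ (MonoidAlgebra ℂ G) V :=
    ⟨fun c b v => by rw [hsmul, hsmul, map_smul]; rfl⟩
  haveI hComm : SMulCommClass ℂ (MonoidAlgebra ℂ G) V :=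
    ⟨fun c b v => by rw [hsmul, hsmul]; exact ((π b).map_smul c v).symm⟩
  -- invariant submodules are stable under the whole algebra
  have hstable : ∀ (q : Submodule ℂ V), (∀ (g : G) (x : V), x ∈ q → ρ g x ∈ q) →
      ∀ (b : MonoidAlgebra ℂ G) (x : V), x ∈ q → π b x ∈ q := by
    intro q hq b
    induction b using MonoidAlgebra.induction_on with
    | of g => intro x hx; rw [Representation.asAlgebraHom_of]; exact hq g x hx
    | add f f' hf hf' =>  intro x hx
                          rw [map_add, LinearMap.add_apply]
                          exact q.add_mem (hf x hx) (hf' x hx)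
    | smul c f hf =>  intro x hx
                      rw [map_smul, LinearMap.smul_apply]
                      exact q.smul_mem c (hf x hx)
  -- turning invariant `ℂ`-submodules into `MonoidAlgebra`-submodules
  let toB : ∀ (q : Submodule ℂ V), (∀ (g : G) (x : V), x ∈ q → ρ g x ∈ q) →
      Submodule (MonoidAlgebra ℂ G) V := fun q hq =>
    { carrier := q
      add_mem' := fun ha hb => q.add_mem ha hb
      zero_mem' := q.zero_mem
      smul_mem' := fun b x hx => hstable q hq b x hx }
  let P : R → Submodule (MonoidAlgebra ℂ G) V := fun r => toB (p r) (hinv r)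
  have memPr : ∀ {r : R} {x : V}, x ∈ p r → x ∈ P r := fun h => h
  have memrP : ∀ {r : R} {x : V}, x ∈ P r → x ∈ p r := fun h => h
  have toB_restrict : ∀ r, Submodule.restrictScalars ℂ (P r) = p r := fun r =>
    Submodule.ext fun x => Iff.rfl
  -- the `P r` are atoms
  have hatom : ∀ r, IsAtom (P r) := by
    intro r
    constructor
    · intro h
      apply hbot r
      rw [← toB_restrict r, h]
      simp
    · intro N hN
      have hq' : ∀ (g : G) (x : V), x ∈ Submodule.restrictScalars ℂ N → 
          ρ g x ∈ Submodule.restrictScalars ℂ N := by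
        intro g x hx
        have : ρ g x = (MonoidAlgebra.of ℂ G g) • x := by
          rw [hsmul, Representation.asAlgebraHom_of]
        rw [Submodule.restrictScalars_mem] at hx ⊢
        rw [this]
        exact N.smul_mem _ hx
      have hle : Submodule.restrictScalars ℂ N ≤ p r := by
        intro x hx
        exact memrP (hN.le hx)
      rcases hirr r (Submodule.restrictScalars ℂ N) hle hq' with h | h
      · exact Submodule.restrictScalars_injective ℂ _ _ (by rw [h]; simp)
      · exfalso
        apply hN.ne
        apply Submodule.restrictScalars_injective ℂ
        rw [h, toB_restrict r]
  haveI hsimple : ∀ r, IsSimpleModule (MonoidAlgebra ℂ G) ↥(P r) := fun r =>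
    (isSimpleModule_iff_isAtom).mpr (hatom r)
  -- semisimplicity of V
  have htopP : ⨆ r, P r = ⊤ := by
    have hall : ∀ x : V, x ∈ ⨆ r, P r := by
      intro x
      have hx : x ∈ (⊤ : Submodule ℂ V) := trivial
      rw [← hinternal.submodule_iSup_eq_top] at hx
      induction hx using Submodule.iSup_induction' with
      | mem s y hy => exact le_iSup P s (memPr hy)
      | zero => exact Submodule.zero_mem _
      | add y z _ _ hy hz => exact Submodule.add_mem _ hy hz
    exact Submodule.eq_top_iff'.mpr hall
  haveI hss : IsSemisimpleModule (MonoidAlgebra ℂ G) V :=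
    isSemisimpleModule_of_isSemisimpleModule_submodule' (p := P)
      (fun r => haveI := hsimple r; inferInstance) htopP
  -- equivariant maps commute with the algebra action
  have hBlin : ∀ (f : V →ₗ[ℂ] V), (∀ (g : G) (x : V), f (ρ g x) = ρ g (f x)) →
      ∀ (b : MonoidAlgebra ℂ G) (x : V), f (b • x) = b • f x := by
    intro f hf b
    induction b using MonoidAlgebra.induction_on with
    | of g => intro x
              rw [hsmul, hsmul, Representation.asAlgebraHom_of]
              exact hf g x
    | add b b' hb hb' =>  intro x
                          rw [add_smul, add_smul, f.map_add, hb x, hb' x]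
    | smul c b hb =>  intro x
                      rw [smul_assoc, smul_assoc, f.map_smul, hb]
  -- the projections are equivariant
  have hproj : ∀ (r : R) (g : G) (x : V),
      projID p hinternal r (ρ g x) = ρ g (projID p hinternal r x) := by
    intro r g x
    have hx : x ∈ (⊤ : Submodule ℂ V) := trivial
    rw [← hinternal.submodule_iSup_eq_top] at hx
    induction hx using Submodule.iSup_induction' with
    | mem s y hy =>
        rw [projID_of_mem p hinternal hy, projID_of_mem p hinternal (hinv s g y hy)]
        split <;> simp
    | zero => simp
    | add y z _ _ hy hz =>
        simp only [map_add]
        rw [hy, hz]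
  -- key commutation : T commutes with every `MonoidAlgebra`-endomorphism of V
  have hcomm : ∀ (φ : V →ₗ[MonoidAlgebra ℂ G] V) (x : V), T (φ x) = φ (T x) := by
    intro φ
    have hφρ : ∀ (g : G) (x : V), φ (ρ g x) = ρ g (φ x) := by
      intro g x
      have := φ.map_smul (MonoidAlgebra.of ℂ G g) x
      rwa [hsmul, hsmul, Representation.asAlgebraHom_of] at this
    have hφC : ∀ (c : ℂ) (x : V), φ (c • x) = c • φ x := by
      intro c x
      have := φ.map_smul (algebraMap ℂ (MonoidAlgebra ℂ G) c) x
      rwa [algebraMap_smul, algebraMap_smul] at this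
    -- φ preserves each p r
    have hφmem : ∀ (r : R) (x : V), x ∈ p r → φ x ∈ p r := by
      intro r x hx
      have hzero : ∀ s, s ≠ r → projID p hinternal s (φ x) = 0 := by
        intro s hs
        -- the composite is a B-linear map between non-isomorphic simple modules
        let Cf : V →ₗ[ℂ] V :=
          { toFun := fun v => projID p hinternal s (φ v)
            map_add' := fun a b => by
              show projID p hinternal s (φ (a + b)) = _
              rw [map_add, map_add]
            map_smul' := fun c a => by
              show projID p hinternal s (φ (c • a)) = c • projID p hinternal s (φ a)
              rw [hφC, map_smul] }
        have hCf : ∀ (g : G) (v : V), Cf (ρ g v) = ρ g (Cf v) := by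
          intro g v
          show projID p hinternal s (φ (ρ g v)) = ρ g (projID p hinternal s (φ v))
          rw [hφρ, hproj]
        let ψ : ↥(P r) →ₗ[MonoidAlgebra ℂ G] ↥(P s) :=
          { toFun := fun v => ⟨Cf (v : V), memPr (projID_mem p hinternal s _)⟩
            map_add' := fun a b => Subtype.ext (by
              show Cf ((a : V) + (b : V)) = Cf (a : V) + Cf (b : V)
              rw [map_add])
            map_smul' := fun b a => Subtype.ext (by
              show Cf (b • (a : V)) = b • Cf (a : V)
              exact hBlin Cf hCf b (a : V)) }
        haveI := hsimple r
        haveI := hsimple s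
        rcases ψ.bijective_or_eq_zero with hbij | hz
        · exfalso
          apply hni r s (Ne.symm hs)
          let e0 := LinearEquiv.ofBijective ψ hbij
          refine ⟨{ toFun := fun v => ⟨Cf (v : V), projID_mem p hinternal s _⟩
                    invFun := fun w => ⟨((e0.symm ⟨(w : V), memPr w.2⟩ : ↥(P r)) : V),
                      memrP (e0.symm ⟨(w : V), memPr w.2⟩).2⟩
                    map_add' := fun a b => Subtype.ext (by
                      show Cf ((a : V) + (b : V)) = Cf (a : V) + Cf (b : V)
                      rw [map_add])
                    map_smul' := fun c a => Subtype.ext (by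
                      show Cf (c • (a : V)) = c • Cf (a : V)
                      rw [map_smul])
                    left_inv := fun a => Subtype.ext (by
                      show ((e0.symm ⟨Cf (a : V), _⟩ : ↥(P r)) : V) = (a : V)
                      have : (⟨Cf (a : V), memPr (projID_mem p hinternal s _)⟩ : ↥(P s))
                          = ψ ⟨(a : V), memPr a.2⟩ := rfl
                      rw [this]
                      have h2 : e0.symm (ψ ⟨(a : V), memPr a.2⟩) = ⟨(a : V), memPr a.2⟩ :=
                        e0.symm_apply_apply _
                      rw [h2])
                    right_inv := fun w => Subtype.ext (by
                      show Cf ((e0.symm ⟨(w : V), memPr w.2⟩ : ↥(P r)) : V) = (w : V)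
                      have h2 : ψ (e0.symm ⟨(w : V), memPr w.2⟩) = ⟨(w : V), memPr w.2⟩ :=
                        e0.apply_symm_apply _
                      exact congrArg Subtype.val h2) }, ?_⟩
          intro g v
          show Cf (ρ g (v : V)) = ρ g (Cf (v : V))
          exact hCf g (v : V)
        · have h3 := LinearMap.congr_fun hz (⟨x, memPr hx⟩ : ↥(P r))
          rw [LinearMap.zero_apply] at h3
          exact congrArg Subtype.val h3
      have hsum := sum_projID p hinternal (φ x)
      have hone : ∑ s, projID p hinternal s (φ x) = projID p hinternal r (φ x) :=
        Finset.sum_eq_single r (fun s _ hs => hzero s hs) (by simp)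
      rw [← hsum, hone]
      exact projID_mem p hinternal r (φ x)
    -- φ acts as a scalar on each p r
    have hscal : ∀ r : R, ∃ μ : ℂ, ∀ x ∈ p r, φ x = μ • x := by
      intro r
      haveI : Nontrivial ↥(p r) := Submodule.nontrivial_iff_ne_bot.mpr (hbot r)
      let f' : Module.End ℂ ↥(p r) :=
        { toFun := fun v => ⟨φ (v : V), hφmem r _ v.2⟩
          map_add' := fun a b => Subtype.ext (by
            show φ ((a : V) + (b : V)) = φ (a : V) + φ (b : V)
            rw [map_add])
          map_smul' := fun c a => Subtype.ext (hφC c (a : V)) }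
      obtain ⟨μ, hμ⟩ := Module.End.exists_eigenvalue f'
      obtain ⟨w, hw⟩ := hμ.exists_hasEigenvector
      have hweq : φ (w : V) = μ • (w : V) := congrArg Subtype.val hw.apply_eq_smul
      have hwne : w ≠ 0 := hw.2
      refine ⟨μ, ?_⟩
      -- χ := φ - μ on P r, a non-injective B-endomorphism of a simple module
      let χ : ↥(P r) →ₗ[MonoidAlgebra ℂ G] ↥(P r) :=
        { toFun := fun a => ⟨φ (a : V) - μ • (a : V),
            Submodule.sub_mem _ (memPr (hφmem r _ (memrP a.2))) (Submodule.smul_mem _ _ a.2)⟩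
          map_add' := fun a b => Subtype.ext (by
            show φ ((a : V) + (b : V)) - μ • ((a : V) + (b : V))
              = (φ (a : V) - μ • (a : V)) + (φ (b : V) - μ • (b : V))
            rw [map_add, smul_add]
            abel)
          map_smul' := fun b a => Subtype.ext (by
            show φ (b • (a : V)) - μ • (b • (a : V)) = b • (φ (a : V) - μ • (a : V))
            rw [φ.map_smul, smul_comm μ b, smul_sub]) }
      haveI := hsimple r
      rcases χ.injective_or_eq_zero with hinj | hz
      · exfalso
        apply hwne
        have h0 : χ ⟨(w : V), memPr w.2⟩ = 0 := by
          apply Subtype.ext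
          show φ (w : V) - μ • (w : V) = 0
          rw [hweq, sub_self]
        have h1 := hinj (a₂ := 0) (by rw [h0, map_zero])
        exact Subtype.ext (congrArg Subtype.val h1)
      · intro x hx
        have h2 : φ x - μ • x = 0 := by
          have h3 := LinearMap.congr_fun hz (⟨x, memPr hx⟩ : ↥(P r))
          rw [LinearMap.zero_apply] at h3
          exact congrArg Subtype.val h3
        exact sub_eq_zero.mp h2
    choose μ hμ using hscal
    intro x
    have hx : x ∈ (⊤ : Submodule ℂ V) := trivial
    rw [← hinternal.submodule_iSup_eq_top] at hx
    induction hx using Submodule.iSup_induction' with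
    | mem s y hy =>
        rw [hμ s y hy, T.map_smul, hμ s (T y) (hT s y hy)]
    | zero => simp
    | add y z _ _ hy hz =>
        simp only [map_add]
        rw [hy, hz]
  -- Part B : the `V ^ n` trick
  set n := Module.finrank ℂ V with hn
  let bV : Module.Basis (Fin n) ℂ V := Module.finBasis ℂ V
  haveI hssn : IsSemisimpleModule (MonoidAlgebra ℂ G) (Fin n → V) := by
    refine isSemisimpleModule_of_isSemisimpleModule_submodule'
      (p := fun i => LinearMap.range (LinearMap.single (MonoidAlgebra ℂ G)
        (fun _ : Fin n => V) i)) (fun i => ?_) (LinearMap.iSup_range_single _ _)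
    have hinj : Function.Injective (LinearMap.single (MonoidAlgebra ℂ G)
        (fun _ : Fin n => V) i) := by
      rw [LinearMap.coe_single]
      exact Pi.single_injective i
    exact IsSemisimpleModule.congr (LinearEquiv.ofInjective _ hinj).symm
  let U : Submodule (MonoidAlgebra ℂ G) (Fin n → V) :=
    Submodule.span (MonoidAlgebra ℂ G) {fun i => bV i}
  obtain ⟨U', hU'⟩ := exists_isCompl U
  let P0 : (Fin n → V) →ₗ[MonoidAlgebra ℂ G] (Fin n → V) :=
    U.subtype ∘ₗ U.linearProjOfIsCompl U' hU'
  have hP0mem : ∀ w, P0 w ∈ U := fun w => Submodule.coe_mem _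
  have hP0id : ∀ w ∈ U, P0 w = w := fun w hw =>
    congrArg Subtype.val (Submodule.linearProjOfIsCompl_apply_left hU' ⟨w, hw⟩)
  have hcommPi : ∀ (Φ : (Fin n → V) →ₗ[MonoidAlgebra ℂ G] (Fin n → V)) (w : Fin n → V)
      (i : Fin n), T (Φ w i) = Φ (fun j => T (w j)) i := by
    intro Φ w i
    calc T (Φ w i)
        = T (Φ (∑ j, Pi.single j (w j)) i) := by rw [Finset.univ_sum_single]
      _ = ∑ j, T (Φ (Pi.single j (w j)) i) := by
          rw [map_sum, Finset.sum_apply, map_sum]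
      _ = ∑ j, Φ (Pi.single j (T (w j))) i := by
          refine Finset.sum_congr rfl fun j _ => ?_
          have := hcomm ((LinearMap.proj i : (Fin n → V) →ₗ[MonoidAlgebra ℂ G] V) ∘ₗ Φ ∘ₗ
            LinearMap.single (MonoidAlgebra ℂ G) (fun _ : Fin n => V) j) (w j)
          simpa using this
      _ = Φ (∑ j, Pi.single j (T (w j))) i := by rw [map_sum, Finset.sum_apply]
      _ = Φ (fun j => T (w j)) i := by rw [Finset.univ_sum_single (f := fun j => T (w j))]
  have hvU : (fun i => (bV i : V)) ∈ U := Submodule.mem_span_singleton_self _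
  have hTv : (fun i => T (bV i)) ∈ U := by
    have heq : (fun i => T (bV i)) = P0 (fun j => T (bV j)) := by
      funext i
      conv_lhs => rw [show (bV i : V) = P0 (fun j => bV j) i from
        (congrFun (hP0id _ hvU) i).symm]
      exact hcommPi P0 (fun j => bV j) i
    rw [heq]
    exact hP0mem _
  obtain ⟨b, hb⟩ := Submodule.mem_span_singleton.mp hTv
  have hTb : T = π b := by
    apply bV.ext
    intro i
    have h2 : b • (bV i) = T (bV i) := congrFun hb i
    rw [← h2]
    exact hsmul b _
  rw [hTb]
  have hspan : ∀ c : MonoidAlgebra ℂ G,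
      π c ∈ Submodule.span ℂ (Set.range fun g => (ρ g : V →ₗ[ℂ] V)) := by
    intro c
    induction c using MonoidAlgebra.induction_on with
    | of g => exact Submodule.subset_span ⟨g, by rw [Representation.asAlgebraHom_of]⟩
    | add f f' hf hf' => rw [map_add]; exact Submodule.add_mem _ hf hf'
    | smul c f hf => rw [map_smul]; exact Submodule.smul_mem _ _ hf
  exact hspan b

theorem memory_dim_lower_bound
    {G : Type*} [Group G] {V : Type*} [AddCommGroup V] [Module ℂ V]
    [FiniteDimensional ℂ V] (ρ : Representation ℂ G V)
    {R : Type*} [Fintype R] [DecidableEq R] (p : R → Submodule ℂ V)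
    (hinternal : DirectSum.IsInternal p)
    (hinv : ∀ (r : R) (g : G) (x : V), x ∈ p r → ρ g x ∈ p r)
    (hbot : ∀ r : R, p r ≠ ⊥)
    (hirr : ∀ (r : R) (q : Submodule ℂ V), q ≤ p r →
      (∀ (g : G) (x : V), x ∈ q → ρ g x ∈ q) → q = ⊥ ∨ q = p r)
    (hni : ∀ r r' : R, r ≠ r' →
      ¬ ∃ f : (p r) ≃ₗ[ℂ] (p r'),
        ∀ (g : G) (x : p r),
          ((f ⟨ρ g (x : V), hinv r g (x : V) x.2⟩ : p r') : V) = ρ g ((f x : p r') : V))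
    {Min Mout : Type*} [AddCommGroup Min] [Module ℂ Min] [FiniteDimensional ℂ Min]
    [AddCommGroup Mout] [Module ℂ Mout] [FiniteDimensional ℂ Mout]
    (E : V →ₗ[ℂ] Min) (D : Mout →ₗ[ℂ] V) (S : G → (Min →ₗ[ℂ] Mout))
    (hfact : ∀ g : G, (ρ g : V →ₗ[ℂ] V) = D ∘ₗ S g ∘ₗ E) :
    Module.finrank ℂ Min * Module.finrank ℂ Mout ≥ ∑ r : R, Module.finrank ℂ (p r) ^ 2 := by
  classical
  set W : Submodule ℂ (V →ₗ[ℂ] V) :=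
    Submodule.span ℂ (Set.range fun g => (ρ g : V →ₗ[ℂ] V)) with hW
  -- the factorization map
  let Φ : (Min →ₗ[ℂ] Mout) →ₗ[ℂ] (V →ₗ[ℂ] V) :=
    { toFun := fun T => D ∘ₗ T ∘ₗ E
      map_add' := fun T T' => by ext x; simp
      map_smul' := fun c T => by ext x; simp }
  have hWle : W ≤ LinearMap.range Φ := by
    rw [hW, Submodule.span_le]
    rintro _ ⟨g, rfl⟩
    exact ⟨S g, (hfact g).symm⟩
  have h1 : Module.finrank ℂ W ≤ Module.finrank ℂ Min * Module.finrank ℂ Mout := by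
    calc Module.finrank ℂ W ≤ Module.finrank ℂ (LinearMap.range Φ) :=
          Submodule.finrank_mono hWle
      _ ≤ Module.finrank ℂ (Min →ₗ[ℂ] Mout) := LinearMap.finrank_range_le Φ
      _ = Module.finrank ℂ Min * Module.finrank ℂ Mout := Module.finrank_linearMap ℂ ℂ Min Mout
  -- the embedding of ∏ End(p r) into W
  let Θ : (∀ r : R, (↥(p r) →ₗ[ℂ] ↥(p r))) →ₗ[ℂ] (V →ₗ[ℂ] V) :=
    { toFun := fun f => ∑ r, (p r).subtype ∘ₗ f r ∘ₗ ((projID p hinternal r).codRestrict (p r)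
        (projID_mem p hinternal r))
      map_add' := fun f f' => by
        rw [← Finset.sum_add_distrib]
        refine Finset.sum_congr rfl fun r _ => ?_
        ext x; simp
      map_smul' := fun c f => by
        rw [RingHom.id_apply, Finset.smul_sum]
        refine Finset.sum_congr rfl fun r _ => ?_
        ext x; simp }
  have hΘapp : ∀ f (s : R) (x : V) (hx : x ∈ p s), Θ f x = ((f s) ⟨x, hx⟩ : ↥(p s)) := by
    intro f s x hx
    show (∑ r, (p r).subtype ∘ₗ f r ∘ₗ _) x = _
    rw [LinearMap.sum_apply, Finset.sum_eq_single s]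
    · simp only [LinearMap.coe_comp, Function.comp_apply, Submodule.coe_subtype]
      congr 1
      apply Subtype.ext
      simp [LinearMap.codRestrict, projID_of_mem p hinternal hx]
    · intro r _ hr
      simp only [LinearMap.coe_comp, Function.comp_apply, Submodule.coe_subtype]
      have : ((projID p hinternal r).codRestrict (p r) (projID_mem p hinternal r)) x = 0 := by
        apply Subtype.ext
        simp [LinearMap.codRestrict, projID_of_mem p hinternal hx, Ne.symm hr]
      rw [this]; simp
    · simp
  have hΘrange : ∀ f, Θ f ∈ W := by
    intro f
    apply density ρ p hinternal hinv hbot hirr hni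
    intro r x hx
    rw [hΘapp f r x hx]
    exact ((f r) ⟨x, hx⟩).2
  have hΘinj : Function.Injective Θ := by
    rw [← LinearMap.ker_eq_bot]
    refine (Submodule.eq_bot_iff _).2 fun f hf => ?_
    funext r
    ext x
    have h0 := congrArg (fun (T : V →ₗ[ℂ] V) => T (x : V)) hf
    simp only [LinearMap.zero_apply] at h0
    rw [hΘapp f r (x : V) x.2] at h0
    simpa using h0
  have h2 : ∑ r : R, Module.finrank ℂ (p r) ^ 2 ≤ Module.finrank ℂ W := by
    have : Module.finrank ℂ (∀ r : R, (↥(p r) →ₗ[ℂ] ↥(p r))) ≤ Module.finrank ℂ W := by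
      let Θ' : (∀ r : R, (↥(p r) →ₗ[ℂ] ↥(p r))) →ₗ[ℂ] W :=
        Θ.codRestrict W hΘrange
      have hinj' : Function.Injective Θ' := fun a b h =>
        hΘinj (congrArg Subtype.val h)
      exact LinearMap.finrank_le_finrank_of_injective hinj'
    refine le_trans (le_of_eq ?_) this
    rw [Module.finrank_pi_fintype]
    exact Finset.sum_congr rfl fun r _ => by
      rw [Module.finrank_linearMap, sq]
  exact le_trans h2 h1
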